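/- arXiv:2005.01249 — 2 statements merged into one kernel-verified Lean document; each statement's English description precedes it below -/
import Mathlib

section
/- Let m > 0, 0 < r₀ < 2m, and θ ∈ (0, π). Let g = diag(2m/r₀ − 1, r₀², r₀² sin²θ) and k = diag(m r₀⁻²(2m/r₀−1)^{1/2}, −r₀(2m/r₀−1)^{1/2}, −r₀ sin²θ (2m/r₀−1)^{1/2}). For a ∈ ℝ define g(a) = g + a·C_g and k(a) = k + a·C_k, where C_g is the symmetric 3×3 matrix whose only nonzero entries are its (1,3) and (3,1) entries, both equal to −2 m r₀⁻¹ sin²θ, and C_k is the symmetric 3×3 matrix whose only nonzero entries are its (1,3) and (3,1) entries, both equal to −m r₀⁻² sin²θ (2m/r₀−1)^{1/2}. Set π(a) = g(a)⁻¹ k(a) g(a)⁻¹ − tr(g(a)⁻¹ k(a))·g(a)⁻¹, defined for a near 0. Then the function a ↦ tr(g(a)⁻¹ k(a)) has derivative 0 at a = 0, and the function a ↦ (π(a))₁₃ (the (t,φ) entry of π(a)) has derivative m·r₀⁻⁴·(2m/r₀ − 1)^{−1/2} at a = 0; in particular this derivative is independent of θ. -/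
open Real Matrix

private lemma aux_inv (A B D c : ℝ) (hB : B ≠ 0) (a : ℝ) (ha : A * D - c ^ 2 * a ^ 2 ≠ 0) :
    (!![A, 0, c * a; 0, B, 0; c * a, 0, D] : Matrix (Fin 3) (Fin 3) ℝ)⁻¹ =
      !![D / (A * D - c ^ 2 * a ^ 2), 0, -(c * a) / (A * D - c ^ 2 * a ^ 2);
         0, B⁻¹, 0;
         -(c * a) / (A * D - c ^ 2 * a ^ 2), 0, A / (A * D - c ^ 2 * a ^ 2)] := by
  apply Matrix.inv_eq_right_inv
  ext i j
  fin_cases i <;> fin_cases j <;>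
    simp [Matrix.mul_apply, Fin.sum_univ_three, Matrix.one_apply] <;>
    field_simp <;> ring

private lemma aux_slice (A B D c p s u q : ℝ) (hA : A ≠ 0) (hB : B ≠ 0) (hD : D ≠ 0) :
    HasDerivAt (fun a : ℝ =>
      Matrix.trace ((!![A, 0, c * a; 0, B, 0; c * a, 0, D] : Matrix (Fin 3) (Fin 3) ℝ)⁻¹ *
        !![p, 0, q * a; 0, s, 0; q * a, 0, u])) 0 0 ∧
    HasDerivAt (fun a : ℝ =>
      ((!![A, 0, c * a; 0, B, 0; c * a, 0, D] : Matrix (Fin 3) (Fin 3) ℝ)⁻¹ *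
          !![p, 0, q * a; 0, s, 0; q * a, 0, u] *
          (!![A, 0, c * a; 0, B, 0; c * a, 0, D] : Matrix (Fin 3) (Fin 3) ℝ)⁻¹ -
        Matrix.trace ((!![A, 0, c * a; 0, B, 0; c * a, 0, D] : Matrix (Fin 3) (Fin 3) ℝ)⁻¹ *
          !![p, 0, q * a; 0, s, 0; q * a, 0, u]) •
          (!![A, 0, c * a; 0, B, 0; c * a, 0, D] : Matrix (Fin 3) (Fin 3) ℝ)⁻¹) 0 2)
      ((-c * D * p + A * (D * q - c * u) + c * (D * p + A * u + s / B * (A * D))) /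
        (A * D) ^ 2) 0 := by
  have hAD : A * D ≠ 0 := mul_ne_zero hA hD
  have hΔd : HasDerivAt (fun a : ℝ => A * D - c ^ 2 * a ^ 2) 0 0 := by
    simpa using ((hasDerivAt_pow 2 (0 : ℝ)).const_mul (c ^ 2)).const_sub (A * D)
  have hne : A * D - c ^ 2 * (0 : ℝ) ^ 2 ≠ 0 := by simpa using hAD
  have hev : ∀ᶠ a in nhds (0 : ℝ), A * D - c ^ 2 * a ^ 2 ≠ 0 := by
    have hcont : Continuous fun a : ℝ => A * D - c ^ 2 * a ^ 2 := by fun_prop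
    exact (hcont.continuousAt (x := 0)).eventually_ne hne
  have htr : ∀ a : ℝ, A * D - c ^ 2 * a ^ 2 ≠ 0 →
      Matrix.trace ((!![A, 0, c * a; 0, B, 0; c * a, 0, D] : Matrix (Fin 3) (Fin 3) ℝ)⁻¹ *
          !![p, 0, q * a; 0, s, 0; q * a, 0, u]) =
        ((D * p + A * u + s / B * (A * D)) + (-2 * c * q - s / B * c ^ 2) * a ^ 2) /
          (A * D - c ^ 2 * a ^ 2) := by
    intro a ha
    rw [aux_inv A B D c hB a ha, Matrix.trace_fin_three]
    simp [Matrix.mul_apply, Fin.sum_univ_three]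
    have ha' : D * A - c ^ 2 * a ^ 2 ≠ 0 := by rwa [mul_comm D A]
    field_simp
    ring
  have hpi : ∀ a : ℝ, A * D - c ^ 2 * a ^ 2 ≠ 0 →
      ((!![A, 0, c * a; 0, B, 0; c * a, 0, D] : Matrix (Fin 3) (Fin 3) ℝ)⁻¹ *
          !![p, 0, q * a; 0, s, 0; q * a, 0, u] *
          (!![A, 0, c * a; 0, B, 0; c * a, 0, D] : Matrix (Fin 3) (Fin 3) ℝ)⁻¹ -
        Matrix.trace ((!![A, 0, c * a; 0, B, 0; c * a, 0, D] : Matrix (Fin 3) (Fin 3) ℝ)⁻¹ *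
          !![p, 0, q * a; 0, s, 0; q * a, 0, u]) •
          (!![A, 0, c * a; 0, B, 0; c * a, 0, D] : Matrix (Fin 3) (Fin 3) ℝ)⁻¹) 0 2 =
        ((-c * D * p + A * (D * q - c * u) + c * (D * p + A * u + s / B * (A * D))) * a +
          (c ^ 2 * q + c * (-2 * c * q - s / B * c ^ 2)) * a ^ 3) /
          (A * D - c ^ 2 * a ^ 2) ^ 2 := by
    intro a ha
    rw [aux_inv A B D c hB a ha]
    simp [Matrix.mul_apply, Fin.sum_univ_three, Matrix.trace_fin_three, Matrix.sub_apply,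
      Matrix.smul_apply, smul_eq_mul]
    have ha' : D * A - c ^ 2 * a ^ 2 ≠ 0 := by rwa [mul_comm D A]
    field_simp
    ring
  constructor
  · have hPTd : HasDerivAt (fun a : ℝ =>
        (D * p + A * u + s / B * (A * D)) + (-2 * c * q - s / B * c ^ 2) * a ^ 2) 0 0 := by
      simpa using ((hasDerivAt_pow 2 (0 : ℝ)).const_mul (-2 * c * q - s / B * c ^ 2)).const_add
        (D * p + A * u + s / B * (A * D))
    have h := hPTd.fun_div hΔd hne
    have h' : HasDerivAt (fun a : ℝ =>
        ((D * p + A * u + s / B * (A * D)) + (-2 * c * q - s / B * c ^ 2) * a ^ 2) /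
          (A * D - c ^ 2 * a ^ 2)) 0 0 := by
      convert h using 1
      · rfl
      · rfl
      simp
    exact h'.congr_of_eventuallyEq (hev.mono fun a ha => htr a ha)
  · have hPfd : HasDerivAt (fun a : ℝ =>
        (-c * D * p + A * (D * q - c * u) + c * (D * p + A * u + s / B * (A * D))) * a +
          (c ^ 2 * q + c * (-2 * c * q - s / B * c ^ 2)) * a ^ 3)
        (-c * D * p + A * (D * q - c * u) + c * (D * p + A * u + s / B * (A * D))) 0 := by
      have := ((hasDerivAt_id (0 : ℝ)).const_mul
          (-c * D * p + A * (D * q - c * u) + c * (D * p + A * u + s / B * (A * D)))).fun_add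
        ((hasDerivAt_pow 3 (0 : ℝ)).const_mul (c ^ 2 * q + c * (-2 * c * q - s / B * c ^ 2)))
      simpa using this
    have hQne : (A * D - c ^ 2 * (0 : ℝ) ^ 2) ^ 2 ≠ 0 := pow_ne_zero 2 hne
    have h := hPfd.fun_div (hΔd.fun_pow 2) hQne
    have h' : HasDerivAt (fun a : ℝ =>
        ((-c * D * p + A * (D * q - c * u) + c * (D * p + A * u + s / B * (A * D))) * a +
          (c ^ 2 * q + c * (-2 * c * q - s / B * c ^ 2)) * a ^ 3) /
          (A * D - c ^ 2 * a ^ 2) ^ 2)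
        ((-c * D * p + A * (D * q - c * u) + c * (D * p + A * u + s / B * (A * D))) /
          (A * D) ^ 2) 0 := by
      convert h using 1
      · rfl
      · rfl
      field_simp
      ring
    exact h'.congr_of_eventuallyEq (hev.mono fun a ha => hpi a ha)

set_option maxHeartbeats 1000000 in
/-- First-order (in the Kerr angular momentum parameter `a`) behaviour of the slice data:
with `g(a) = ḡ_m + a·C_g`, `k(a) = k̄_m + a·C_k` and
`π(a) = g(a)⁻¹k(a)g(a)⁻¹ − tr(g(a)⁻¹k(a))·g(a)⁻¹`, the trace `tr(g(a)⁻¹k(a))` has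
derivative `0` at `a = 0`, and the `(t,φ)` entry of `π(a)` has derivative
`m·r₀⁻⁴·(2m/r₀−1)^{−1/2}` at `a = 0`, independently of `θ`. -/
theorem stmt_4 (m r₀ θ : ℝ) (hm : 0 < m) (hr₀ : 0 < r₀) (hr₀' : r₀ < 2 * m)
    (hθ : 0 < θ) (hθ' : θ < π) :
    let Cg : Matrix (Fin 3) (Fin 3) ℝ :=
      !![0, 0, -2 * m * r₀⁻¹ * Real.sin θ ^ 2;
         0, 0, 0;
         -2 * m * r₀⁻¹ * Real.sin θ ^ 2, 0, 0]
    let Ck : Matrix (Fin 3) (Fin 3) ℝ :=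
      !![0, 0, -m * r₀⁻¹ ^ 2 * Real.sin θ ^ 2 * Real.sqrt (2 * m / r₀ - 1);
         0, 0, 0;
         -m * r₀⁻¹ ^ 2 * Real.sin θ ^ 2 * Real.sqrt (2 * m / r₀ - 1), 0, 0]
    let g : ℝ → Matrix (Fin 3) (Fin 3) ℝ := fun a =>
      Matrix.diagonal ![2 * m / r₀ - 1, r₀ ^ 2, r₀ ^ 2 * Real.sin θ ^ 2] + a • Cg
    let k : ℝ → Matrix (Fin 3) (Fin 3) ℝ := fun a =>
      Matrix.diagonal ![m * r₀⁻¹ ^ 2 * Real.sqrt (2 * m / r₀ - 1),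
        -r₀ * Real.sqrt (2 * m / r₀ - 1),
        -r₀ * Real.sin θ ^ 2 * Real.sqrt (2 * m / r₀ - 1)] + a • Ck
    let πm : ℝ → Matrix (Fin 3) (Fin 3) ℝ := fun a =>
      (g a)⁻¹ * k a * (g a)⁻¹ - Matrix.trace ((g a)⁻¹ * k a) • (g a)⁻¹
    HasDerivAt (fun a => Matrix.trace ((g a)⁻¹ * k a)) 0 0 ∧
      HasDerivAt (fun a => πm a 0 2)
        (m * r₀⁻¹ ^ 4 * (Real.sqrt (2 * m / r₀ - 1))⁻¹) 0 := by
  have hsin : 0 < Real.sin θ := Real.sin_pos_of_pos_of_lt_pi hθ hθ'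
  have hA : (0 : ℝ) < 2 * m / r₀ - 1 := by
    rw [sub_pos, lt_div_iff₀ hr₀]; linarith
  have hsq : 0 < Real.sqrt (2 * m / r₀ - 1) := Real.sqrt_pos.mpr hA
  have hsq2 : Real.sqrt (2 * m / r₀ - 1) ^ 2 = 2 * m / r₀ - 1 := Real.sq_sqrt hA.le
  set x := Real.sqrt (2 * m / r₀ - 1) with hx
  intro Cg Ck g k πm
  have aux := aux_slice (2 * m / r₀ - 1) (r₀ ^ 2) (r₀ ^ 2 * Real.sin θ ^ 2)
    (-2 * m * r₀⁻¹ * Real.sin θ ^ 2)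
    (m * r₀⁻¹ ^ 2 * x) (-r₀ * x) (-r₀ * Real.sin θ ^ 2 * x)
    (-m * r₀⁻¹ ^ 2 * Real.sin θ ^ 2 * x)
    hA.ne' (by positivity) (by positivity)
  have hg : ∀ a : ℝ, g a =
      !![2 * m / r₀ - 1, 0, -2 * m * r₀⁻¹ * Real.sin θ ^ 2 * a;
         0, r₀ ^ 2, 0;
         -2 * m * r₀⁻¹ * Real.sin θ ^ 2 * a, 0, r₀ ^ 2 * Real.sin θ ^ 2] := by
    intro a
    ext i j
    fin_cases i <;> fin_cases j <;>
      simp [g, Cg, Matrix.diagonal_apply, Matrix.add_apply, Matrix.smul_apply,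
        Matrix.vecHead, Matrix.vecTail] <;> ring
  have hk : ∀ a : ℝ, k a =
      !![m * r₀⁻¹ ^ 2 * x, 0, -m * r₀⁻¹ ^ 2 * Real.sin θ ^ 2 * x * a;
         0, -r₀ * x, 0;
         -m * r₀⁻¹ ^ 2 * Real.sin θ ^ 2 * x * a, 0, -r₀ * Real.sin θ ^ 2 * x] := by
    intro a
    ext i j
    fin_cases i <;> fin_cases j <;>
      simp [k, Ck, Matrix.diagonal_apply, Matrix.add_apply, Matrix.smul_apply,
        Matrix.vecHead, Matrix.vecTail] <;> ring
  constructor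
  · have hfun : (fun a => Matrix.trace ((g a)⁻¹ * k a)) =
        fun a : ℝ => Matrix.trace
          ((!![2 * m / r₀ - 1, 0, -2 * m * r₀⁻¹ * Real.sin θ ^ 2 * a;
               0, r₀ ^ 2, 0;
               -2 * m * r₀⁻¹ * Real.sin θ ^ 2 * a, 0,
               r₀ ^ 2 * Real.sin θ ^ 2] : Matrix (Fin 3) (Fin 3) ℝ)⁻¹ *
            !![m * r₀⁻¹ ^ 2 * x, 0, -m * r₀⁻¹ ^ 2 * Real.sin θ ^ 2 * x * a;
               0, -r₀ * x, 0;
               -m * r₀⁻¹ ^ 2 * Real.sin θ ^ 2 * x * a, 0, -r₀ * Real.sin θ ^ 2 * x]) := by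
      funext a; rw [hg a, hk a]
    rw [hfun]
    exact aux.1
  · have hfun : (fun a => πm a 0 2) =
        fun a : ℝ =>
          ((!![2 * m / r₀ - 1, 0, -2 * m * r₀⁻¹ * Real.sin θ ^ 2 * a;
               0, r₀ ^ 2, 0;
               -2 * m * r₀⁻¹ * Real.sin θ ^ 2 * a, 0,
               r₀ ^ 2 * Real.sin θ ^ 2] : Matrix (Fin 3) (Fin 3) ℝ)⁻¹ *
            !![m * r₀⁻¹ ^ 2 * x, 0, -m * r₀⁻¹ ^ 2 * Real.sin θ ^ 2 * x * a;
               0, -r₀ * x, 0;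
               -m * r₀⁻¹ ^ 2 * Real.sin θ ^ 2 * x * a, 0, -r₀ * Real.sin θ ^ 2 * x] *
            (!![2 * m / r₀ - 1, 0, -2 * m * r₀⁻¹ * Real.sin θ ^ 2 * a;
               0, r₀ ^ 2, 0;
               -2 * m * r₀⁻¹ * Real.sin θ ^ 2 * a, 0,
               r₀ ^ 2 * Real.sin θ ^ 2] : Matrix (Fin 3) (Fin 3) ℝ)⁻¹ -
            Matrix.trace
              ((!![2 * m / r₀ - 1, 0, -2 * m * r₀⁻¹ * Real.sin θ ^ 2 * a;
                   0, r₀ ^ 2, 0;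
                   -2 * m * r₀⁻¹ * Real.sin θ ^ 2 * a, 0,
                   r₀ ^ 2 * Real.sin θ ^ 2] : Matrix (Fin 3) (Fin 3) ℝ)⁻¹ *
                !![m * r₀⁻¹ ^ 2 * x, 0, -m * r₀⁻¹ ^ 2 * Real.sin θ ^ 2 * x * a;
                   0, -r₀ * x, 0;
                   -m * r₀⁻¹ ^ 2 * Real.sin θ ^ 2 * x * a, 0, -r₀ * Real.sin θ ^ 2 * x]) •
              (!![2 * m / r₀ - 1, 0, -2 * m * r₀⁻¹ * Real.sin θ ^ 2 * a;
                 0, r₀ ^ 2, 0;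
                 -2 * m * r₀⁻¹ * Real.sin θ ^ 2 * a, 0,
                 r₀ ^ 2 * Real.sin θ ^ 2] : Matrix (Fin 3) (Fin 3) ℝ)⁻¹) 0 2 := by
      funext a; simp only [πm]; rw [hg a, hk a]
    rw [hfun]
    have hval : (m * r₀⁻¹ ^ 4 * x⁻¹ : ℝ) =
        (-(-2 * m * r₀⁻¹ * Real.sin θ ^ 2) * (r₀ ^ 2 * Real.sin θ ^ 2) *
            (m * r₀⁻¹ ^ 2 * x) +
          (2 * m / r₀ - 1) *
            ((r₀ ^ 2 * Real.sin θ ^ 2) * (-m * r₀⁻¹ ^ 2 * Real.sin θ ^ 2 * x) -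
              (-2 * m * r₀⁻¹ * Real.sin θ ^ 2) * (-r₀ * Real.sin θ ^ 2 * x)) +
          (-2 * m * r₀⁻¹ * Real.sin θ ^ 2) *
            ((r₀ ^ 2 * Real.sin θ ^ 2) * (m * r₀⁻¹ ^ 2 * x) +
              (2 * m / r₀ - 1) * (-r₀ * Real.sin θ ^ 2 * x) +
              (-r₀ * x) / r₀ ^ 2 * ((2 * m / r₀ - 1) * (r₀ ^ 2 * Real.sin θ ^ 2)))) /
          ((2 * m / r₀ - 1) * (r₀ ^ 2 * Real.sin θ ^ 2)) ^ 2 := by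
      have hxi : x⁻¹ = x / (2 * m / r₀ - 1) := by
        rw [← hsq2, pow_two]
        field_simp
      rw [hxi]
      have hAne : (2 * m / r₀ - 1 : ℝ) ≠ 0 := hA.ne'
      generalize hq : (2 * m / r₀ - 1 : ℝ) = A at hAne ⊢
      have hs := hsin.ne'
      have hr := hr₀.ne'
      field_simp
      ring
    rw [hval]
    exact aux.2
end

section
/- Let m₀ > 0 and 0 < r₀ < 2m₀. With g(a), k(a), π(a) defined as the first-order Kerr slice data (for the mass m = m₀): g(a) = diag(2m₀/r₀ − 1, r₀², r₀² sin²θ) + a·C_g and k(a) = diag(m₀ r₀⁻²(2m₀/r₀−1)^{1/2}, −r₀(2m₀/r₀−1)^{1/2}, −r₀ sin²θ (2m₀/r₀−1)^{1/2}) + a·C_k, where C_g (resp. C_k) is the symmetric 3×3 matrix whose only nonzero entries are the (1,3) and (3,1) entries −2m₀ r₀⁻¹ sin²θ (resp. −m₀ r₀⁻² sin²θ (2m₀/r₀−1)^{1/2}), and π(a) = g(a)⁻¹ k(a) g(a)⁻¹ − tr(g(a)⁻¹ k(a))·g(a)⁻¹, define for a near 0: G(a) = ∫₀^{2π} ∫₀^π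 [ (π(a))₁₃ · (2m₀/r₀ − 1)^{1/2} · r₀² sin²θ + 2r₀⁻¹(2m₀/r₀ − 1)^{−1/2} · (r₀² sin²θ)⁻¹ · (−2m₀ a r₀⁻¹ sin²θ) · (2m₀/r₀ − 1)^{1/2} · r₀² sin²θ ] · r₀² sin θ dθ dφ. Then G is differentiable at a = 0 with G′(0) = −8π m₀. -/
open Real Matrix MeasureTheory Metric

set_option maxHeartbeats 2000000 in
private theorem stmt_6_keylem (m₀ r₀ a θ : ℝ) (hm₀ : 0 < m₀) (hr₀ : 0 < r₀)
    (hr₀' : r₀ < 2 * m₀) (hS : Real.sin θ ≠ 0)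
    (hE : 0 < (2 * m₀ / r₀ - 1) * r₀ ^ 2 - (2 * m₀ / r₀) ^ 2 * a ^ 2 * Real.sin θ ^ 2) :
    (let g : Matrix (Fin 3) (Fin 3) ℝ :=
          Matrix.diagonal ![2 * m₀ / r₀ - 1, r₀ ^ 2, r₀ ^ 2 * Real.sin θ ^ 2] +
            a • !![0, 0, -2 * m₀ * r₀⁻¹ * Real.sin θ ^ 2;
                   0, 0, 0;
                   -2 * m₀ * r₀⁻¹ * Real.sin θ ^ 2, 0, 0]
     let k : Matrix (Fin 3) (Fin 3) ℝ :=
          Matrix.diagonal ![m₀ * r₀⁻¹ ^ 2 * Real.sqrt (2 * m₀ / r₀ - 1),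
              -r₀ * Real.sqrt (2 * m₀ / r₀ - 1),
              -r₀ * Real.sin θ ^ 2 * Real.sqrt (2 * m₀ / r₀ - 1)] +
            a • !![0, 0, -m₀ * r₀⁻¹ ^ 2 * Real.sin θ ^ 2 * Real.sqrt (2 * m₀ / r₀ - 1);
                   0, 0, 0;
                   -m₀ * r₀⁻¹ ^ 2 * Real.sin θ ^ 2 * Real.sqrt (2 * m₀ / r₀ - 1), 0, 0]
     let πa : Matrix (Fin 3) (Fin 3) ℝ :=
          g⁻¹ * k * g⁻¹ - Matrix.trace (g⁻¹ * k) • g⁻¹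
     (πa 0 2 * Real.sqrt (2 * m₀ / r₀ - 1) * r₀ ^ 2 * Real.sin θ ^ 2 +
            2 * r₀⁻¹ * (Real.sqrt (2 * m₀ / r₀ - 1))⁻¹ * (r₀ ^ 2 * Real.sin θ ^ 2)⁻¹ *
              (-2 * m₀ * a * r₀⁻¹ * Real.sin θ ^ 2) * Real.sqrt (2 * m₀ / r₀ - 1) *
              (r₀ ^ 2 * Real.sin θ ^ 2)) *
          (r₀ ^ 2 * Real.sin θ)) =
      2 * m₀ * a * Real.sin θ ^ 3 *
        ((2 * m₀ / r₀ - 1) * r₀ ^ 2 /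
            (2 * ((2 * m₀ / r₀ - 1) * r₀ ^ 2 - (2 * m₀ / r₀) ^ 2 * a ^ 2 * Real.sin θ ^ 2)) -
          2) := by
  have hr : r₀ ≠ 0 := ne_of_gt hr₀
  have hpos : 0 < 2 * m₀ / r₀ - 1 := by
    rw [sub_pos, lt_div_iff₀ hr₀]; linarith
  set s := Real.sqrt (2 * m₀ / r₀ - 1) with hsdef
  have hsq : s ^ 2 = 2 * m₀ / r₀ - 1 := Real.sq_sqrt hpos.le
  have hs0 : 0 < s := Real.sqrt_pos.mpr hpos
  have hs : s ≠ 0 := ne_of_gt hs0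
  set S := Real.sin θ with hSdef
  have hm' : m₀ = r₀ * (s ^ 2 + 1) / 2 := by
    rw [hsq]; field_simp; ring
  have h2m : 2 * m₀ / r₀ = s ^ 2 + 1 := by rw [hm']; field_simp
  set E : ℝ := s ^ 2 * r₀ ^ 2 - (s ^ 2 + 1) ^ 2 * a ^ 2 * S ^ 2 with hEdef
  have hE2 : 0 < E := by
    rw [hEdef, show s ^ 2 + 1 = 2 * m₀ / r₀ from by rw [hsq]; ring, hsq]; exact hE
  have hEne : E ≠ 0 := ne_of_gt hE2
  rw [show (2 * m₀ / r₀ - 1) * r₀ ^ 2 - (2 * m₀ / r₀) ^ 2 * a ^ 2 * S ^ 2 = E by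
    rw [hEdef, h2m]; ring]
  have hg : (Matrix.diagonal ![2 * m₀ / r₀ - 1, r₀ ^ 2, r₀ ^ 2 * S ^ 2] +
            a • !![0, 0, -2 * m₀ * r₀⁻¹ * S ^ 2;
                   0, 0, 0;
                   -2 * m₀ * r₀⁻¹ * S ^ 2, 0, 0]) =
      !![s ^ 2, 0, -((s ^ 2 + 1) * a * S ^ 2); 0, r₀ ^ 2, 0;
         -((s ^ 2 + 1) * a * S ^ 2), 0, r₀ ^ 2 * S ^ 2] := by
    rw [hm']
    ext i j
    fin_cases i <;> fin_cases j <;>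
      simp [Matrix.diagonal, Matrix.vecHead, Matrix.vecTail] <;>
      field_simp <;> ring
  have hk : (Matrix.diagonal ![m₀ * r₀⁻¹ ^ 2 * s, -r₀ * s, -r₀ * S ^ 2 * s] +
            a • !![0, 0, -m₀ * r₀⁻¹ ^ 2 * S ^ 2 * s;
                   0, 0, 0;
                   -m₀ * r₀⁻¹ ^ 2 * S ^ 2 * s, 0, 0]) =
      !![(s ^ 2 + 1) * s / (2 * r₀), 0, -((s ^ 2 + 1) * s * S ^ 2 * a / (2 * r₀));
         0, -r₀ * s, 0;
         -((s ^ 2 + 1) * s * S ^ 2 * a / (2 * r₀)), 0, -r₀ * S ^ 2 * s] := by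
    rw [hm']
    ext i j
    fin_cases i <;> fin_cases j <;>
      simp [Matrix.diagonal, Matrix.vecHead, Matrix.vecTail] <;>
      field_simp <;> ring
  have hmul : !![s ^ 2, 0, -((s ^ 2 + 1) * a * S ^ 2); 0, r₀ ^ 2, 0;
         -((s ^ 2 + 1) * a * S ^ 2), 0, r₀ ^ 2 * S ^ 2] *
      !![r₀ ^ 2 * S ^ 2 / (S ^ 2 * E), 0, (s ^ 2 + 1) * a * S ^ 2 / (S ^ 2 * E);
         0, (r₀ ^ 2)⁻¹, 0;
         (s ^ 2 + 1) * a * S ^ 2 / (S ^ 2 * E), 0, s ^ 2 / (S ^ 2 * E)] = 1 := by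
    rw [hEdef]
    ext i j
    fin_cases i <;> fin_cases j <;>
      simp [Matrix.mul_apply, Fin.sum_univ_three, Matrix.one_apply,
        Matrix.vecHead, Matrix.vecTail] <;>
      (rw [hEdef] at hEne
       have hEne' : s ^ 2 * r₀ ^ 2 - S ^ 2 * (s ^ 2 + 1) ^ 2 * a ^ 2 ≠ 0 := by
         rw [hEdef] at hE2; nlinarith
       field_simp) <;> ring
  have hinv : (Matrix.diagonal ![2 * m₀ / r₀ - 1, r₀ ^ 2, r₀ ^ 2 * S ^ 2] +
            a • !![0, 0, -2 * m₀ * r₀⁻¹ * S ^ 2;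
                   0, 0, 0;
                   -2 * m₀ * r₀⁻¹ * S ^ 2, 0, 0])⁻¹ =
      !![r₀ ^ 2 * S ^ 2 / (S ^ 2 * E), 0, (s ^ 2 + 1) * a * S ^ 2 / (S ^ 2 * E);
         0, (r₀ ^ 2)⁻¹, 0;
         (s ^ 2 + 1) * a * S ^ 2 / (S ^ 2 * E), 0, s ^ 2 / (S ^ 2 * E)] := by
    rw [hg]; exact Matrix.inv_eq_right_inv hmul
  simp only [hinv, hk]
  simp only [Matrix.mul_fin_three, Matrix.trace_fin_three, Matrix.sub_apply, Matrix.smul_apply,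
    Matrix.cons_val', Matrix.cons_val_zero, Matrix.cons_val_one, Matrix.head_cons,
    Matrix.empty_val', Matrix.cons_val_fin_one, Matrix.head_fin_const, Matrix.cons_val_two,
    Matrix.tail_cons, smul_eq_mul, Matrix.of_apply]
  rw [hm']
  have hSE : S ^ 2 * E ≠ 0 := by positivity
  field_simp
  ring

set_option maxHeartbeats 1000000 in
private theorem stmt_6_deriv_aux (m₀ P Q ε : ℝ) (hm₀ : 0 < m₀) (hP : 0 < P) (hQ : 0 < Q)
    (hε : 0 < ε) (hQε : Q * ε ^ 2 = P / 4) :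
    HasDerivAt (fun a : ℝ => ∫ θ in (0:ℝ)..π,
        2 * m₀ * a * Real.sin θ ^ 3 * (P / (2 * (P - Q * a ^ 2 * Real.sin θ ^ 2)) - 2))
      (-4 * m₀) 0 := by
  have hEb : ∀ a : ℝ, a ∈ ball (0:ℝ) ε → ∀ θ : ℝ,
      Q * a ^ 2 * Real.sin θ ^ 2 ≤ P / 4 := by
    intro a ha θ
    have ha' : |a| < ε := by simpa [Real.dist_eq] using ha
    have h1 : a ^ 2 ≤ ε ^ 2 := by
      have := abs_nonneg a
      nlinarith [ha'.le, sq_abs a]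
    have h2 : Real.sin θ ^ 2 ≤ 1 := Real.sin_sq_le_one θ
    nlinarith [sq_nonneg a, sq_nonneg (Real.sin θ), mul_le_mul_of_nonneg_left h1 hQ.le]
  have hElow : ∀ a : ℝ, a ∈ ball (0:ℝ) ε → ∀ θ : ℝ,
      3 * P / 4 ≤ P - Q * a ^ 2 * Real.sin θ ^ 2 := by
    intro a ha θ; have := hEb a ha θ; linarith
  have key := intervalIntegral.hasDerivAt_integral_of_dominated_loc_of_deriv_le
    (μ := volume) (a := (0:ℝ)) (b := π) (x₀ := (0:ℝ)) (s := ball (0:ℝ) ε) (bound := fun _ => 4 * m₀)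
    (F := fun a θ => 2 * m₀ * a * Real.sin θ ^ 3 *
        (P / (2 * (P - Q * a ^ 2 * Real.sin θ ^ 2)) - 2))
    (F' := fun a θ => 2 * m₀ * Real.sin θ ^ 3 *
        (P / (2 * (P - Q * a ^ 2 * Real.sin θ ^ 2)) +
          P * Q * a ^ 2 * Real.sin θ ^ 2 / (P - Q * a ^ 2 * Real.sin θ ^ 2) ^ 2 - 2))
    (Metric.ball_mem_nhds (0:ℝ) hε) ?meas ?int ?meas' ?bound ?bddint ?diff
  case meas =>
    filter_upwards [Metric.ball_mem_nhds (0:ℝ) hε] with a ha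
    have hden : ∀ θ : ℝ, 2 * (P - Q * a ^ 2 * Real.sin θ ^ 2) ≠ 0 :=
      fun θ => ne_of_gt (by have := hElow a ha θ; linarith)
    have h1 : Continuous fun θ : ℝ => 2 * (P - Q * a ^ 2 * Real.sin θ ^ 2) := by continuity
    have h2 : Continuous fun θ : ℝ => P / (2 * (P - Q * a ^ 2 * Real.sin θ ^ 2)) :=
      continuous_const.div h1 hden
    have h3 : Continuous fun θ : ℝ => 2 * m₀ * a * Real.sin θ ^ 3 := by continuity
    exact (h3.mul (h2.sub continuous_const)).aestronglyMeasurable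
  case int =>
    have h0 : (fun θ : ℝ => 2 * m₀ * (0:ℝ) * Real.sin θ ^ 3 *
        (P / (2 * (P - Q * (0:ℝ) ^ 2 * Real.sin θ ^ 2)) - 2)) = fun _ => (0:ℝ) := by
      funext θ; ring
    have : IntervalIntegrable (fun θ : ℝ => 2 * m₀ * (0:ℝ) * Real.sin θ ^ 3 *
        (P / (2 * (P - Q * (0:ℝ) ^ 2 * Real.sin θ ^ 2)) - 2)) volume 0 π := by
      rw [h0]; exact intervalIntegrable_const
    exact this
  case meas' =>
    have h0 : (fun θ : ℝ => 2 * m₀ * Real.sin θ ^ 3 *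
        (P / (2 * (P - Q * (0:ℝ) ^ 2 * Real.sin θ ^ 2)) +
          P * Q * (0:ℝ) ^ 2 * Real.sin θ ^ 2 / (P - Q * (0:ℝ) ^ 2 * Real.sin θ ^ 2) ^ 2 - 2)) =
        fun θ => -3 * m₀ * Real.sin θ ^ 3 := by
      funext θ
      have h : P - Q * (0:ℝ) ^ 2 * Real.sin θ ^ 2 = P := by ring
      rw [h]
      field_simp
      ring
    have : AEStronglyMeasurable (fun θ : ℝ => 2 * m₀ * Real.sin θ ^ 3 *
        (P / (2 * (P - Q * (0:ℝ) ^ 2 * Real.sin θ ^ 2)) +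
          P * Q * (0:ℝ) ^ 2 * Real.sin θ ^ 2 / (P - Q * (0:ℝ) ^ 2 * Real.sin θ ^ 2) ^ 2 - 2))
        (volume.restrict (Set.uIoc (0:ℝ) π)) := by
      rw [h0]
      exact ((continuous_const.mul (Real.continuous_sin.pow 3)).aestronglyMeasurable)
    exact this
  case bound =>
    refine Filter.Eventually.of_forall fun θ _ a ha => ?_
    have h1 := hElow a ha θ
    have h2 := hEb a ha θ
    have he : (0:ℝ) < P - Q * a ^ 2 * Real.sin θ ^ 2 := by linarith
    have hq0 : (0:ℝ) ≤ Q * a ^ 2 * Real.sin θ ^ 2 := by positivity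
    have hfrac1 : P / (2 * (P - Q * a ^ 2 * Real.sin θ ^ 2)) ≤ 2 / 3 := by
      rw [div_le_div_iff₀ (by linarith) (by norm_num)]; nlinarith
    have hfrac1' : 0 ≤ P / (2 * (P - Q * a ^ 2 * Real.sin θ ^ 2)) := by positivity
    have hfrac2 : P * Q * a ^ 2 * Real.sin θ ^ 2 /
        (P - Q * a ^ 2 * Real.sin θ ^ 2) ^ 2 ≤ 4 / 9 := by
      rw [div_le_div_iff₀ (by positivity) (by norm_num)]
      nlinarith [mul_le_mul_of_nonneg_left h2 hP.le,
        mul_le_mul h1 h1 (by linarith : (0:ℝ) ≤ 3 * P / 4)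
          (by linarith : (0:ℝ) ≤ P - Q * a ^ 2 * Real.sin θ ^ 2)]
    have hfrac2' : 0 ≤ P * Q * a ^ 2 * Real.sin θ ^ 2 /
        (P - Q * a ^ 2 * Real.sin θ ^ 2) ^ 2 := by positivity
    have hX : |P / (2 * (P - Q * a ^ 2 * Real.sin θ ^ 2)) +
        P * Q * a ^ 2 * Real.sin θ ^ 2 / (P - Q * a ^ 2 * Real.sin θ ^ 2) ^ 2 - 2| ≤ 2 :=
      abs_le.mpr ⟨by linarith, by linarith⟩
    have hsin : |Real.sin θ ^ 3| ≤ 1 := by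
      rw [abs_pow]
      exact pow_le_one₀ (abs_nonneg _) (Real.abs_sin_le_one θ)
    show ‖2 * m₀ * Real.sin θ ^ 3 *
        (P / (2 * (P - Q * a ^ 2 * Real.sin θ ^ 2)) +
          P * Q * a ^ 2 * Real.sin θ ^ 2 / (P - Q * a ^ 2 * Real.sin θ ^ 2) ^ 2 - 2)‖ ≤ 4 * m₀
    rw [Real.norm_eq_abs, abs_mul, abs_mul, abs_of_pos (by linarith : (0:ℝ) < 2 * m₀)]
    nlinarith [abs_nonneg (Real.sin θ ^ 3),
      abs_nonneg (P / (2 * (P - Q * a ^ 2 * Real.sin θ ^ 2)) +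
        P * Q * a ^ 2 * Real.sin θ ^ 2 / (P - Q * a ^ 2 * Real.sin θ ^ 2) ^ 2 - 2),
      mul_le_mul hsin hX (abs_nonneg _) zero_le_one]
  case bddint => exact intervalIntegrable_const
  case diff =>
    refine Filter.Eventually.of_forall fun θ _ a ha => ?_
    have h1 := hElow a ha θ
    have hda : 2 * (P - Q * a ^ 2 * Real.sin θ ^ 2) ≠ 0 := ne_of_gt (by linarith)
    have hb : HasDerivAt (fun b : ℝ => b ^ 2) (2 * a) a := by simpa using hasDerivAt_pow 2 a
    have h3 := (hasDerivAt_const a P).div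
      (((hb.const_mul Q).mul_const (Real.sin θ ^ 2)).const_sub P |>.const_mul 2) hda
    have h4 := (hasDerivAt_id' a).mul (h3.sub_const 2)
    have h5 := h4.const_mul (2 * m₀ * Real.sin θ ^ 3)
    have hfun : (fun b : ℝ => 2 * m₀ * b * Real.sin θ ^ 3 *
        (P / (2 * (P - Q * b ^ 2 * Real.sin θ ^ 2)) - 2)) =
        (fun b : ℝ => 2 * m₀ * Real.sin θ ^ 3 *
          (b * (P / (2 * (P - Q * b ^ 2 * Real.sin θ ^ 2)) - 2))) := by
      funext b; ring
    show HasDerivAt (fun b : ℝ => 2 * m₀ * b * Real.sin θ ^ 3 *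
        (P / (2 * (P - Q * b ^ 2 * Real.sin θ ^ 2)) - 2))
      (2 * m₀ * Real.sin θ ^ 3 *
        (P / (2 * (P - Q * a ^ 2 * Real.sin θ ^ 2)) +
          P * Q * a ^ 2 * Real.sin θ ^ 2 / (P - Q * a ^ 2 * Real.sin θ ^ 2) ^ 2 - 2)) a
    rw [hfun]
    refine h5.congr_deriv ?_
    simp only [Pi.div_apply]
    have he : (0:ℝ) < P - Q * a ^ 2 * Real.sin θ ^ 2 := by linarith
    have he' : P - Real.sin θ ^ 2 * Q * a ^ 2 ≠ 0 := ne_of_gt (by linarith)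
    field_simp
    ring
  have hval : (∫ θ in (0:ℝ)..π, 2 * m₀ * Real.sin θ ^ 3 *
      (P / (2 * (P - Q * (0:ℝ) ^ 2 * Real.sin θ ^ 2)) +
        P * Q * (0:ℝ) ^ 2 * Real.sin θ ^ 2 / (P - Q * (0:ℝ) ^ 2 * Real.sin θ ^ 2) ^ 2 - 2)) =
      -4 * m₀ := by
    have h0 : (fun θ : ℝ => 2 * m₀ * Real.sin θ ^ 3 *
        (P / (2 * (P - Q * (0:ℝ) ^ 2 * Real.sin θ ^ 2)) +
          P * Q * (0:ℝ) ^ 2 * Real.sin θ ^ 2 / (P - Q * (0:ℝ) ^ 2 * Real.sin θ ^ 2) ^ 2 - 2)) =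
        fun θ => -3 * m₀ * Real.sin θ ^ 3 := by
      funext θ
      have h : P - Q * (0:ℝ) ^ 2 * Real.sin θ ^ 2 = P := by ring
      rw [h]
      field_simp
      ring
    rw [h0, intervalIntegral.integral_const_mul, integral_sin_pow_three]
    simp [Real.cos_pi]
    ring
  rw [hval] at key
  exact key.2

/-- The leading part `G(a)` of the pairing `𝓘₃` against the rotation Killing field `∂_φ`,
computed over the sphere `{t = t₂}` of the slice `r = r₀` inside the Schwarzschild black
hole of mass `m₀`, is differentiable at `a = 0` with `G′(0) = −8πm₀`. -/
theorem stmt_6 (m₀ r₀ : ℝ) (hm₀ : 0 < m₀) (hr₀ : 0 < r₀) (hr₀' : r₀ < 2 * m₀) :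
    HasDerivAt (fun a : ℝ =>
      ∫ _φ in (0 : ℝ)..(2 * π), ∫ θ in (0 : ℝ)..π,
        (let g : Matrix (Fin 3) (Fin 3) ℝ :=
          Matrix.diagonal ![2 * m₀ / r₀ - 1, r₀ ^ 2, r₀ ^ 2 * Real.sin θ ^ 2] +
            a • !![0, 0, -2 * m₀ * r₀⁻¹ * Real.sin θ ^ 2;
                   0, 0, 0;
                   -2 * m₀ * r₀⁻¹ * Real.sin θ ^ 2, 0, 0]
        let k : Matrix (Fin 3) (Fin 3) ℝ :=
          Matrix.diagonal ![m₀ * r₀⁻¹ ^ 2 * Real.sqrt (2 * m₀ / r₀ - 1),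
              -r₀ * Real.sqrt (2 * m₀ / r₀ - 1),
              -r₀ * Real.sin θ ^ 2 * Real.sqrt (2 * m₀ / r₀ - 1)] +
            a • !![0, 0, -m₀ * r₀⁻¹ ^ 2 * Real.sin θ ^ 2 * Real.sqrt (2 * m₀ / r₀ - 1);
                   0, 0, 0;
                   -m₀ * r₀⁻¹ ^ 2 * Real.sin θ ^ 2 * Real.sqrt (2 * m₀ / r₀ - 1), 0, 0]
        let πa : Matrix (Fin 3) (Fin 3) ℝ :=
          g⁻¹ * k * g⁻¹ - Matrix.trace (g⁻¹ * k) • g⁻¹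
        (πa 0 2 * Real.sqrt (2 * m₀ / r₀ - 1) * r₀ ^ 2 * Real.sin θ ^ 2 +
            2 * r₀⁻¹ * (Real.sqrt (2 * m₀ / r₀ - 1))⁻¹ * (r₀ ^ 2 * Real.sin θ ^ 2)⁻¹ *
              (-2 * m₀ * a * r₀⁻¹ * Real.sin θ ^ 2) * Real.sqrt (2 * m₀ / r₀ - 1) *
              (r₀ ^ 2 * Real.sin θ ^ 2)) *
          (r₀ ^ 2 * Real.sin θ)))
      (-8 * π * m₀) 0 := by
  have hr : r₀ ≠ 0 := ne_of_gt hr₀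
  have hpos : 0 < 2 * m₀ / r₀ - 1 := by
    rw [sub_pos, lt_div_iff₀ hr₀]; linarith
  set P : ℝ := (2 * m₀ / r₀ - 1) * r₀ ^ 2 with hPdef
  set Q : ℝ := (2 * m₀ / r₀) ^ 2 with hQdef
  have hP : 0 < P := by rw [hPdef]; positivity
  have hQ : 0 < Q := by rw [hQdef]; positivity
  set ε : ℝ := Real.sqrt (P / Q) / 2 with hεdef
  have hε : 0 < ε := by
    rw [hεdef]
    exact div_pos (Real.sqrt_pos.mpr (div_pos hP hQ)) two_pos
  have hQε : Q * ε ^ 2 = P / 4 := by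
    have h1 : ε ^ 2 = P / Q / 4 := by
      rw [hεdef, div_pow, Real.sq_sqrt (div_nonneg hP.le hQ.le)]; norm_num
    rw [h1]
    field_simp
  have hEb : ∀ a : ℝ, |a| < ε → ∀ θ : ℝ, Q * a ^ 2 * Real.sin θ ^ 2 ≤ P / 4 := by
    intro a ha θ
    have h1 : a ^ 2 ≤ ε ^ 2 := by
      have := abs_nonneg a
      nlinarith [ha.le, sq_abs a]
    have h2 : Real.sin θ ^ 2 ≤ 1 := Real.sin_sq_le_one θ
    nlinarith [sq_nonneg a, sq_nonneg (Real.sin θ), mul_le_mul_of_nonneg_left h1 hQ.le]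
  -- the inner function agrees with a simple closed form for small `a`
  have hGeq : ∀ a : ℝ, |a| < ε →
      (∫ _φ in (0 : ℝ)..(2 * π), ∫ θ in (0 : ℝ)..π,
        (let g : Matrix (Fin 3) (Fin 3) ℝ :=
          Matrix.diagonal ![2 * m₀ / r₀ - 1, r₀ ^ 2, r₀ ^ 2 * Real.sin θ ^ 2] +
            a • !![0, 0, -2 * m₀ * r₀⁻¹ * Real.sin θ ^ 2;
                   0, 0, 0;
                   -2 * m₀ * r₀⁻¹ * Real.sin θ ^ 2, 0, 0]
        let k : Matrix (Fin 3) (Fin 3) ℝ :=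
          Matrix.diagonal ![m₀ * r₀⁻¹ ^ 2 * Real.sqrt (2 * m₀ / r₀ - 1),
              -r₀ * Real.sqrt (2 * m₀ / r₀ - 1),
              -r₀ * Real.sin θ ^ 2 * Real.sqrt (2 * m₀ / r₀ - 1)] +
            a • !![0, 0, -m₀ * r₀⁻¹ ^ 2 * Real.sin θ ^ 2 * Real.sqrt (2 * m₀ / r₀ - 1);
                   0, 0, 0;
                   -m₀ * r₀⁻¹ ^ 2 * Real.sin θ ^ 2 * Real.sqrt (2 * m₀ / r₀ - 1), 0, 0]
        let πa : Matrix (Fin 3) (Fin 3) ℝ :=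
          g⁻¹ * k * g⁻¹ - Matrix.trace (g⁻¹ * k) • g⁻¹
        (πa 0 2 * Real.sqrt (2 * m₀ / r₀ - 1) * r₀ ^ 2 * Real.sin θ ^ 2 +
            2 * r₀⁻¹ * (Real.sqrt (2 * m₀ / r₀ - 1))⁻¹ * (r₀ ^ 2 * Real.sin θ ^ 2)⁻¹ *
              (-2 * m₀ * a * r₀⁻¹ * Real.sin θ ^ 2) * Real.sqrt (2 * m₀ / r₀ - 1) *
              (r₀ ^ 2 * Real.sin θ ^ 2)) *
          (r₀ ^ 2 * Real.sin θ))) =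
      2 * π * ∫ θ in (0:ℝ)..π,
        2 * m₀ * a * Real.sin θ ^ 3 * (P / (2 * (P - Q * a ^ 2 * Real.sin θ ^ 2)) - 2) := by
    intro a ha
    have hinner : (∫ θ in (0:ℝ)..π,
        (let g : Matrix (Fin 3) (Fin 3) ℝ :=
          Matrix.diagonal ![2 * m₀ / r₀ - 1, r₀ ^ 2, r₀ ^ 2 * Real.sin θ ^ 2] +
            a • !![0, 0, -2 * m₀ * r₀⁻¹ * Real.sin θ ^ 2;
                   0, 0, 0;
                   -2 * m₀ * r₀⁻¹ * Real.sin θ ^ 2, 0, 0]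
        let k : Matrix (Fin 3) (Fin 3) ℝ :=
          Matrix.diagonal ![m₀ * r₀⁻¹ ^ 2 * Real.sqrt (2 * m₀ / r₀ - 1),
              -r₀ * Real.sqrt (2 * m₀ / r₀ - 1),
              -r₀ * Real.sin θ ^ 2 * Real.sqrt (2 * m₀ / r₀ - 1)] +
            a • !![0, 0, -m₀ * r₀⁻¹ ^ 2 * Real.sin θ ^ 2 * Real.sqrt (2 * m₀ / r₀ - 1);
                   0, 0, 0;
                   -m₀ * r₀⁻¹ ^ 2 * Real.sin θ ^ 2 * Real.sqrt (2 * m₀ / r₀ - 1), 0, 0]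
        let πa : Matrix (Fin 3) (Fin 3) ℝ :=
          g⁻¹ * k * g⁻¹ - Matrix.trace (g⁻¹ * k) • g⁻¹
        (πa 0 2 * Real.sqrt (2 * m₀ / r₀ - 1) * r₀ ^ 2 * Real.sin θ ^ 2 +
            2 * r₀⁻¹ * (Real.sqrt (2 * m₀ / r₀ - 1))⁻¹ * (r₀ ^ 2 * Real.sin θ ^ 2)⁻¹ *
              (-2 * m₀ * a * r₀⁻¹ * Real.sin θ ^ 2) * Real.sqrt (2 * m₀ / r₀ - 1) *
              (r₀ ^ 2 * Real.sin θ ^ 2)) *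
          (r₀ ^ 2 * Real.sin θ))) =
        ∫ θ in (0:ℝ)..π,
          2 * m₀ * a * Real.sin θ ^ 3 *
            (P / (2 * (P - Q * a ^ 2 * Real.sin θ ^ 2)) - 2) := by
      apply intervalIntegral.integral_congr
      intro θ _
      by_cases hS : Real.sin θ = 0
      · simp [hS]
      · have h := hEb a ha θ
        have h' : (2 * m₀ / r₀) ^ 2 * a ^ 2 * Real.sin θ ^ 2 ≤
            (2 * m₀ / r₀ - 1) * r₀ ^ 2 / 4 := by simpa [hQdef, hPdef] using h
        have hP' : (0:ℝ) < (2 * m₀ / r₀ - 1) * r₀ ^ 2 := by positivity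
        have hE : 0 < (2 * m₀ / r₀ - 1) * r₀ ^ 2 -
            (2 * m₀ / r₀) ^ 2 * a ^ 2 * Real.sin θ ^ 2 := by linarith
        exact stmt_6_keylem m₀ r₀ a θ hm₀ hr₀ hr₀' hS hE
    rw [intervalIntegral.integral_const, hinner, smul_eq_mul]
    ring
  have hd : HasDerivAt (fun a : ℝ => 2 * π * ∫ θ in (0:ℝ)..π,
      2 * m₀ * a * Real.sin θ ^ 3 * (P / (2 * (P - Q * a ^ 2 * Real.sin θ ^ 2)) - 2))
      (2 * π * (-4 * m₀)) 0 :=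
    (stmt_6_deriv_aux m₀ P Q ε hm₀ hP hQ hε hQε).const_mul (2 * π)
  have hev : (fun a : ℝ =>
      ∫ _φ in (0 : ℝ)..(2 * π), ∫ θ in (0 : ℝ)..π,
        (let g : Matrix (Fin 3) (Fin 3) ℝ :=
          Matrix.diagonal ![2 * m₀ / r₀ - 1, r₀ ^ 2, r₀ ^ 2 * Real.sin θ ^ 2] +
            a • !![0, 0, -2 * m₀ * r₀⁻¹ * Real.sin θ ^ 2;
                   0, 0, 0;
                   -2 * m₀ * r₀⁻¹ * Real.sin θ ^ 2, 0, 0]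
        let k : Matrix (Fin 3) (Fin 3) ℝ :=
          Matrix.diagonal ![m₀ * r₀⁻¹ ^ 2 * Real.sqrt (2 * m₀ / r₀ - 1),
              -r₀ * Real.sqrt (2 * m₀ / r₀ - 1),
              -r₀ * Real.sin θ ^ 2 * Real.sqrt (2 * m₀ / r₀ - 1)] +
            a • !![0, 0, -m₀ * r₀⁻¹ ^ 2 * Real.sin θ ^ 2 * Real.sqrt (2 * m₀ / r₀ - 1);
                   0, 0, 0;
                   -m₀ * r₀⁻¹ ^ 2 * Real.sin θ ^ 2 * Real.sqrt (2 * m₀ / r₀ - 1), 0, 0]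
        let πa : Matrix (Fin 3) (Fin 3) ℝ :=
          g⁻¹ * k * g⁻¹ - Matrix.trace (g⁻¹ * k) • g⁻¹
        (πa 0 2 * Real.sqrt (2 * m₀ / r₀ - 1) * r₀ ^ 2 * Real.sin θ ^ 2 +
            2 * r₀⁻¹ * (Real.sqrt (2 * m₀ / r₀ - 1))⁻¹ * (r₀ ^ 2 * Real.sin θ ^ 2)⁻¹ *
              (-2 * m₀ * a * r₀⁻¹ * Real.sin θ ^ 2) * Real.sqrt (2 * m₀ / r₀ - 1) *
              (r₀ ^ 2 * Real.sin θ ^ 2)) *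
          (r₀ ^ 2 * Real.sin θ))) =ᶠ[nhds (0:ℝ)]
      (fun a : ℝ => 2 * π * ∫ θ in (0:ℝ)..π,
        2 * m₀ * a * Real.sin θ ^ 3 * (P / (2 * (P - Q * a ^ 2 * Real.sin θ ^ 2)) - 2)) := by
    filter_upwards [Metric.ball_mem_nhds (0:ℝ) hε] with a ha
    exact hGeq a (by simpa [Real.dist_eq] using ha)
  have := hd.congr_of_eventuallyEq hev
  exact this.congr_deriv (by ring)
end
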